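/- Let G be a spherically symmetric tree with branching numbers Deg_+(r). Then ∑_{r=0}^∞ V(r)/∂B(r) = ∞ if and only if ∑_{r=0}^∞ 1/Deg_+(r) = ∞, where m(S_r) = ∏_{k=0}^{r−1} Deg_+(k), V(r) = ∑_{k=0}^r m(S_k), and ∂B(r) = m(S_{r+1}). -/

import Mathlib

/-- For a spherically symmetric tree with branching numbers `Deg_+(r) ≥ 1`,
`m(S_r) = ∏_{k<r} Deg_+(k)`, `V(r) = ∑_{k≤r} m(S_k)` and `∂B(r) = m(S_{r+1})`,
the series `∑ V(r)/∂B(r)` diverges iff `∑ 1/Deg_+(r)` diverges. -/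
theorem tree_volume_boundary_iff_reciprocal_degree (Dp : ℕ → ℝ) (hDp : ∀ r, 1 ≤ Dp r)
    (mS V dB : ℕ → ℝ)
    (hmS : ∀ r, mS r = ∏ k ∈ Finset.range r, Dp k)
    (hV : ∀ r, V r = ∑ k ∈ Finset.range (r + 1), mS k)
    (hdB : ∀ r, dB r = mS (r + 1)) :
    (¬ Summable fun r => V r / dB r) ↔ ¬ Summable fun r => 1 / Dp r := by
  apply not_congr
  have hDpos : ∀ r, (0:ℝ) < Dp r := fun r => lt_of_lt_of_le one_pos (hDp r)
  have hmpos : ∀ r, 0 < mS r := fun r => by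
    rw [hmS]; exact Finset.prod_pos fun k _ => hDpos k
  have hmono : ∀ k r, k ≤ r → mS k ≤ mS r := by
    intro k r h
    have hp : (∏ j ∈ Finset.Ico 0 k, Dp j) * ∏ j ∈ Finset.Ico k r, Dp j
        = ∏ j ∈ Finset.Ico 0 r, Dp j :=
      Finset.prod_Ico_consecutive _ (Nat.zero_le k) h
    have h1 : (1:ℝ) ≤ ∏ j ∈ Finset.Ico k r, Dp j := by
      calc (1:ℝ) = ∏ _j ∈ Finset.Ico k r, (1:ℝ) := by simp
        _ ≤ _ := Finset.prod_le_prod (fun _ _ => zero_le_one) (fun j _ => hDp j)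
    rw [hmS, hmS, Finset.range_eq_Ico, Finset.range_eq_Ico, ← hp]
    exact le_mul_of_one_le_right (Finset.prod_pos fun j _ => hDpos j).le h1
  have hrec : ∀ r, mS (r+1) = mS r * Dp r := fun r => by
    rw [hmS, hmS, Finset.prod_range_succ]
  constructor
  · intro hS
    refine hS.of_nonneg_of_le (fun r => div_nonneg zero_le_one (hDpos r).le) (fun r => ?_)
    rw [hdB, hrec, div_le_div_iff₀ (hDpos r) (mul_pos (hmpos r) (hDpos r))]
    have hmV : mS r ≤ V r := by
      rw [hV]
      exact Finset.single_le_sum (fun i _ => (hmpos i).le) (Finset.self_mem_range_succ r)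
    nlinarith [hDpos r, hmpos r]
  · intro ha
    obtain ⟨N, hN⟩ : ∃ N, ∀ r, N ≤ r → 2 ≤ Dp r := by
      have ht := ha.tendsto_atTop_zero
      have h2 : ∀ᶠ r in Filter.atTop, 1 / Dp r < 1/2 :=
        ht.eventually (gt_mem_nhds (by norm_num))
      obtain ⟨N, hN⟩ := Filter.eventually_atTop.1 h2
      refine ⟨N, fun r hr => ?_⟩
      have h3 := hN r hr
      have h4 := hDpos r
      rw [div_lt_div_iff₀ h4 (by norm_num)] at h3
      linarith
    rw [← summable_nat_add_iff N]
    have hb : Summable fun n => ((N : ℝ) + 2) * (1 / Dp (n + N)) :=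
      ((summable_nat_add_iff N).2 ha).mul_left _
    refine hb.of_nonneg_of_le (fun n => div_nonneg
      (by rw [hV]; exact Finset.sum_nonneg fun i _ => (hmpos i).le)
      (by rw [hdB]; exact (hmpos _).le)) (fun n => ?_)
    set r := n + N with hr
    have hNr : N ≤ r := le_add_self
    have key : V r ≤ ((N : ℝ) + 2) * mS r := by
      have hsplit : V r = (∑ k ∈ Finset.range N, mS k) + ∑ k ∈ Finset.Ico N (r+1), mS k := by
        rw [hV, Finset.range_eq_Ico, Finset.range_eq_Ico]
        exact (Finset.sum_Ico_consecutive _ (Nat.zero_le N) (by omega)).symm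
      have h1 : (∑ k ∈ Finset.range N, mS k) ≤ (N : ℝ) * mS r := by
        calc (∑ k ∈ Finset.range N, mS k) ≤ ∑ _k ∈ Finset.range N, mS r :=
              Finset.sum_le_sum fun k hk => hmono k r (by
                have := Finset.mem_range.1 hk; omega)
          _ = (N : ℝ) * mS r := by simp
      have h2 : (∑ k ∈ Finset.Ico N (r+1), mS k) ≤ 2 * mS r := by
        have hterm : ∀ k ∈ Finset.Ico N (r+1), mS k ≤ (1/2:ℝ)^(r-k) * mS r := by
          intro k hk
          obtain ⟨hk1, hk2⟩ := Finset.mem_Ico.1 hk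
          have hprod : mS k * ∏ j ∈ Finset.Ico k r, Dp j = mS r := by
            rw [hmS k, hmS r, Finset.range_eq_Ico, Finset.range_eq_Ico]
            exact Finset.prod_Ico_consecutive _ (Nat.zero_le k) (by omega)
          have hge2 : (2:ℝ)^(r-k) ≤ ∏ j ∈ Finset.Ico k r, Dp j := by
            calc (2:ℝ)^(r-k) = ∏ _j ∈ Finset.Ico k r, (2:ℝ) := by
                  rw [Finset.prod_const, Nat.card_Ico]
              _ ≤ _ := Finset.prod_le_prod (fun j _ => by norm_num)
                  (fun j hj => hN j (le_trans hk1 (Finset.mem_Ico.1 hj).1))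
          rw [div_pow, one_pow, div_mul_eq_mul_div, le_div_iff₀ (by positivity)]
          calc mS k * 2^(r-k) ≤ mS k * ∏ j ∈ Finset.Ico k r, Dp j :=
                mul_le_mul_of_nonneg_left hge2 (hmpos k).le
            _ = mS r := hprod
            _ = 1 * mS r := (one_mul _).symm
        have hgeo : (∑ k ∈ Finset.Ico N (r+1), (1/2:ℝ)^(r-k)) ≤ 2 := by
          calc (∑ k ∈ Finset.Ico N (r+1), (1/2:ℝ)^(r-k))
              ≤ ∑ k ∈ Finset.range (r+1), (1/2:ℝ)^(r-k) := by
                refine Finset.sum_le_sum_of_subset_of_nonneg ?_ (fun i _ _ => by positivity)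
                rw [Finset.range_eq_Ico]
                exact Finset.Ico_subset_Ico (Nat.zero_le N) le_rfl
            _ = ∑ k ∈ Finset.range (r+1), (1/2:ℝ)^k := by
                have := Finset.sum_range_reflect (fun k => (1/2:ℝ)^k) (r+1)
                simpa using this
            _ ≤ 2 := sum_geometric_two_le _
        calc (∑ k ∈ Finset.Ico N (r+1), mS k)
            ≤ ∑ k ∈ Finset.Ico N (r+1), (1/2:ℝ)^(r-k) * mS r := Finset.sum_le_sum hterm
          _ = (∑ k ∈ Finset.Ico N (r+1), (1/2:ℝ)^(r-k)) * mS r := by rw [Finset.sum_mul]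
          _ ≤ 2 * mS r := mul_le_mul_of_nonneg_right hgeo (hmpos r).le
      calc V r = _ := hsplit
        _ ≤ (N : ℝ) * mS r + 2 * mS r := add_le_add h1 h2
        _ = ((N : ℝ) + 2) * mS r := by ring
    rw [hdB, hrec, div_le_iff₀ (mul_pos (hmpos r) (hDpos r))]
    have heq : ((N : ℝ) + 2) * (1 / Dp r) * (mS r * Dp r) = ((N : ℝ) + 2) * mS r := by
      have hne : Dp r ≠ 0 := (hDpos r).ne'
      field_simp
    rw [heq]
    exact key
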